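/- Let X, M, M' be nonempty finite sets, let T be a stochastic kernel from X to X, and let O be a stochastic kernel from M to M'. A quantizer is a function Q : X → M, and it induces the kernel O_Q from X to M' given by O_Q(m'|x) := O(m'|Q(x)). An observation-feedback policy is a family (q_t)_{t≥0} where q_t maps each observation history h ∈ (M')^t to a quantizer q_t(h). For a probability vector ρ on X define predictors recursively over histories: π^ρ_0(⟨⟩) := ρ, and for a history h ∈ (M')^t and m' ∈ M', with normalizer N^ρ_t(h, m') := Σ_{x∈X} O_{q_t(h)}(m'|x)·π^ρ_t(h)(x), set π^ρ_{t+1}(h⌢m')(x') := Σ_{x∈X} T(x'|x)·O_{q_t(h)}(m'|x)·π^ρ_t(h)(x)/N^ρ_t(h,m') when N^ρ_t(h,m') > 0, and π^ρ_{t+1}(h⌢m') := T applied to π^ρ_t(h) otherwise (a junk value on zero-probability branches). Define the path probability of h = (m'_0,…,m'_{t−1}) under prior μ as P^μ(h) := Π_{k=0}^{t−1} N^μ_k((m'_0,…,m'_{k−1}), m'_k). Suppose μ, ν are probability vectors on X with μ(x) > 0 implying ν(x) > 0 for all x, and set α := (1 − δ(T))·(2 − δ(O)). Then for every t ≥ 0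 and every observation-feedback policy, Σ_{h∈(M')^t} P^μ(h) · ‖π^μ_t(h) − π^ν_t(h)‖_TV ≤ α^t · ‖μ − ν‖_TV. (This is the iterated, explicit finite-sum form of the paper's Corollary 3: exponential stability in expected total variation of the predictor process, uniformly over encoding policies.) -/

import Mathlib

open Finset

/-- The predictor process under an observation-feedback policy `q`.
`T x x'` denotes the source kernel `T(x'|x)`, `O m m'` the channel kernel
`O(m'|m)`; the quantizer at time `t` given history `h : Fin t → M'` is
`q t h : X → M`, and the induced kernel is `O_Q(m'|x) = O (Q x) m'`.
`pred T O q ρ t h` is the predictor `π^ρ_t(h)`; on zero-probability branches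
(`N = 0`) it is defined as `T` applied to the previous predictor. -/
noncomputable def pred {X M M' : Type*} [Fintype X] [Fintype M']
    (T : X → X → ℝ) (O : M → M' → ℝ)
    (q : (t : ℕ) → (Fin t → M') → X → M) (ρ : X → ℝ) :
    (t : ℕ) → (Fin t → M') → X → ℝ
  | 0, _ => ρ
  | t + 1, h =>
    let h' : Fin t → M' := fun i => h i.castSucc
    let m' : M' := h (Fin.last t)
    let prev : X → ℝ := pred T O q ρ t h'
    let N : ℝ := ∑ x, O (q t h' x) m' * prev x
    if 0 < N then
      fun x' => (∑ x, T x x' * O (q t h' x) m' * prev x) / N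
    else
      fun x' => ∑ x, T x x' * prev x

/-- The probability `P^ρ(h)` of an observation history `h` under prior `ρ` and
policy `q`: the product of the successive normalizers. -/
noncomputable def pathProb {X M M' : Type*} [Fintype X] [Fintype M']
    (T : X → X → ℝ) (O : M → M' → ℝ)
    (q : (t : ℕ) → (Fin t → M') → X → M) (ρ : X → ℝ) :
    (t : ℕ) → (Fin t → M') → ℝ
  | 0, _ => 1
  | t + 1, h =>
    let h' : Fin t → M' := fun i => h i.castSucc
    pathProb T O q ρ t h' *
      ∑ x, O (q t h' x) (h (Fin.last t)) * pred T O q ρ t h' x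


lemma abs_sub_eq_add_sub_two_min (a b : ℝ) : |a - b| = a + b - 2 * min a b := by
  rcases le_total a b with h | h
  · rw [min_eq_left h, abs_of_nonpos (by linarith)]; ring
  · rw [min_eq_right h, abs_of_nonneg (by linarith)]; ring

lemma dobrushin {A B : Type*} [Fintype A] [Fintype B]
    (K : A → B → ℝ) (hK : ∀ a b, 0 ≤ K a b) (hKs : ∀ a, ∑ b, K a b = 1)
    (δ : ℝ) (hδ : ∀ a a', δ ≤ ∑ b, min (K a b) (K a' b))
    (l : A → ℝ) (hl : ∑ a, l a = 0) :
    ∑ b, |∑ a, K a b * l a| ≤ (1 - δ) * ∑ a, |l a| := by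
  set p : A → ℝ := fun a => max (l a) 0 with hp
  set n : A → ℝ := fun a => max (-l a) 0 with hn
  have hpn : ∀ a, p a - n a = l a := by
    intro a; rcases le_total (l a) 0 with h | h
    · simp [hp, hn, max_eq_right h, max_eq_left (neg_nonneg.2 h)]
    · simp [hp, hn, max_eq_left h, max_eq_right (neg_nonpos.2 h)]
  have habs : ∀ a, |l a| = p a + n a := by
    intro a; rcases le_total (l a) 0 with h | h
    · rw [abs_of_nonpos h]; simp [hp, hn, max_eq_right h, max_eq_left (neg_nonneg.2 h)]
    · rw [abs_of_nonneg h]; simp [hp, hn, max_eq_left h, max_eq_right (neg_nonpos.2 h)]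
  have hp0 : ∀ a, 0 ≤ p a := fun a => le_max_right _ _
  have hn0 : ∀ a, 0 ≤ n a := fun a => le_max_right _ _
  set s : ℝ := ∑ a, p a with hs
  have hsn : ∑ a, n a = s := by
    have h1 : ∑ a, n a = ∑ a, (p a - l a) :=
      Finset.sum_congr rfl fun a _ => by linarith [hpn a]
    rw [h1, Finset.sum_sub_distrib, hl, hs]; ring
  have hs0 : 0 ≤ s := Finset.sum_nonneg fun a _ => hp0 a
  rcases eq_or_lt_of_le hs0 with hse | hsp
  · -- s = 0 : l = 0
    have hpz : ∀ a ∈ Finset.univ, p a = 0 := by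
      intro a _
      exact le_antisymm (by
        have := Finset.single_le_sum (fun a _ => hp0 a) (Finset.mem_univ a)
        linarith [this]) (hp0 a)
    have hnz : ∀ a ∈ Finset.univ, n a = 0 := by
      intro a _
      have hsum : ∑ a, n a = 0 := by rw [hsn]; linarith
      exact le_antisymm (by
        have := Finset.single_le_sum (fun a _ => hn0 a) (Finset.mem_univ a)
        linarith [this]) (hn0 a)
    have hlz : ∀ a, l a = 0 := by
      intro a
      have := hpn a
      rw [hpz a (Finset.mem_univ a), hnz a (Finset.mem_univ a)] at this
      linarith
    simp [hlz]
  · -- s > 0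
    have key : ∀ b, ∑ a, K a b * l a
        = (∑ a, ∑ a', (K a b - K a' b) * (p a * n a')) / s := by
      intro b
      rw [eq_div_iff (ne_of_gt hsp)]
      have expand : ∑ a, ∑ a', (K a b - K a' b) * (p a * n a')
          = (∑ a, K a b * p a) * (∑ a', n a') - (∑ a, p a) * (∑ a', K a' b * n a') := by
        rw [Finset.sum_mul_sum, Finset.sum_mul_sum]
        rw [← Finset.sum_sub_distrib]
        refine Finset.sum_congr rfl fun a _ => ?_
        rw [← Finset.sum_sub_distrib]
        refine Finset.sum_congr rfl fun a' _ => ?_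
        ring
      rw [expand, hsn, ← hs]
      have : ∑ a, K a b * l a = ∑ a, (K a b * p a - K a b * n a) := by
        refine Finset.sum_congr rfl fun a _ => ?_
        rw [← hpn a]; ring
      rw [this, Finset.sum_sub_distrib]
      ring
    calc ∑ b, |∑ a, K a b * l a|
        ≤ ∑ b, (∑ a, ∑ a', |K a b - K a' b| * (p a * n a')) / s := by
          refine Finset.sum_le_sum fun b _ => ?_
          rw [key b, abs_div, abs_of_pos hsp]
          refine div_le_div_of_nonneg_right ?_ hs0
          calc |∑ a, ∑ a', (K a b - K a' b) * (p a * n a')|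
              ≤ ∑ a, |∑ a', (K a b - K a' b) * (p a * n a')| := Finset.abs_sum_le_sum_abs _ _
            _ ≤ ∑ a, ∑ a', |K a b - K a' b| * (p a * n a') := by
                refine Finset.sum_le_sum fun a _ => ?_
                refine (Finset.abs_sum_le_sum_abs _ _).trans ?_
                refine Finset.sum_le_sum fun a' _ => ?_
                rw [abs_mul, abs_of_nonneg (mul_nonneg (hp0 a) (hn0 a'))]
      _ = (∑ a, ∑ a', (∑ b, |K a b - K a' b|) * (p a * n a')) / s := by
          rw [← Finset.sum_div]
          congr 1
          rw [Finset.sum_comm]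
          refine Finset.sum_congr rfl fun a _ => ?_
          rw [Finset.sum_comm]
          refine Finset.sum_congr rfl fun a' _ => ?_
          rw [Finset.sum_mul]
      _ ≤ (∑ a, ∑ a', (2 * (1 - δ)) * (p a * n a')) / s := by
          refine div_le_div_of_nonneg_right ?_ hs0
          refine Finset.sum_le_sum fun a _ => Finset.sum_le_sum fun a' _ => ?_
          refine mul_le_mul_of_nonneg_right ?_ (mul_nonneg (hp0 a) (hn0 a'))
          have hmin : ∑ b, |K a b - K a' b| = 2 - 2 * ∑ b, min (K a b) (K a' b) := by
            have e : ∑ b, |K a b - K a' b|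
                = ∑ b, (K a b + K a' b - 2 * min (K a b) (K a' b)) :=
              Finset.sum_congr rfl fun b _ => abs_sub_eq_add_sub_two_min _ _
            rw [e, Finset.sum_sub_distrib, Finset.sum_add_distrib, hKs, hKs, ← Finset.mul_sum]
            ring
          rw [hmin]
          have := hδ a a'
          linarith
      _ = (1 - δ) * ∑ a, |l a| := by
          have h0 : ∑ a, ∑ a', p a * n a' = s * s := by
            rw [← Finset.sum_mul_sum, hsn]
          have h2 : ∑ a, |l a| = 2 * s := by
            simp_rw [habs]; rw [Finset.sum_add_distrib, hsn]; ring
          have h1 : ∑ a, ∑ a', (2 * (1 - δ)) * (p a * n a') = 2 * (1 - δ) * (s * s) := by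
            simp_rw [← Finset.mul_sum]
            rw [← Finset.sum_mul, hsn, ← hs]
          rw [h1, h2]
          field_simp

lemma step_bound {X M M' : Type*} [Fintype X] [Fintype M']
    (T : X → X → ℝ) (hT_nonneg : ∀ x x', 0 ≤ T x x') (hT_sum : ∀ x, ∑ x', T x x' = 1)
    (O : M → M' → ℝ) (hO_nonneg : ∀ m m', 0 ≤ O m m') (hO_sum : ∀ m, ∑ m', O m m' = 1)
    (δT δO : ℝ)
    (hδT : ∀ x x'', δT ≤ ∑ x', min (T x x') (T x'' x'))
    (hδT1 : δT ≤ 1)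
    (hδO : ∀ m m'', δO ≤ ∑ mm, min (O m mm) (O m'' mm))
    (Q : X → M) (a b : X → ℝ)
    (ha0 : ∀ x, 0 ≤ a x) (has : ∑ x, a x = 1)
    (hb0 : ∀ x, 0 ≤ b x) (hbs : ∑ x, b x = 1)
    (hab : ∀ x, 0 < a x → 0 < b x)
    (FA FB : M' → X → ℝ)
    (hFA : ∀ m', 0 < ∑ x, O (Q x) m' * a x → FA m' =
      fun x' => (∑ x, T x x' * (O (Q x) m' * a x)) / ∑ x, O (Q x) m' * a x)
    (hFB : ∀ m', 0 < ∑ x, O (Q x) m' * b x → FB m' =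
      fun x' => (∑ x, T x x' * (O (Q x) m' * b x)) / ∑ x, O (Q x) m' * b x) :
    ∑ m' : M', (∑ x, O (Q x) m' * a x) * ∑ x', |FA m' x' - FB m' x'|
      ≤ (1 - δT) * (2 - δO) * ∑ x, |a x - b x| := by
  set Na : M' → ℝ := fun m' => ∑ x, O (Q x) m' * a x with hNa
  set Nb : M' → ℝ := fun m' => ∑ x, O (Q x) m' * b x with hNb
  have hNa0 : ∀ m', 0 ≤ Na m' :=
    fun m' => Finset.sum_nonneg fun x _ => mul_nonneg (hO_nonneg _ _) (ha0 x)
  have hNb0 : ∀ m', 0 ≤ Nb m' :=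
    fun m' => Finset.sum_nonneg fun x _ => mul_nonneg (hO_nonneg _ _) (hb0 x)
  have habN : ∀ m', 0 < Na m' → 0 < Nb m' := by
    intro m' h
    obtain ⟨x, hx⟩ : ∃ x, 0 < O (Q x) m' * a x := by
      by_contra hc
      push_neg at hc
      have : Na m' ≤ 0 := Finset.sum_nonpos fun x _ => hc x
      linarith
    have hO' : 0 < O (Q x) m' := by
      rcases (hO_nonneg (Q x) m').lt_or_eq with h' | h'
      · exact h'
      · exfalso; rw [← h'] at hx; simp at hx
    have ha' : 0 < a x := by
      rcases (ha0 x).lt_or_eq with h' | h'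
      · exact h'
      · exfalso; rw [← h'] at hx; simp at hx
    have hb' : 0 < b x := hab x ha'
    have : O (Q x) m' * b x ≤ Nb m' :=
      Finset.single_le_sum (fun x _ => mul_nonneg (hO_nonneg _ _) (hb0 x)) (Finset.mem_univ x)
    nlinarith
  have hδT0 : 0 ≤ 1 - δT := by linarith
  -- the Bayes-update discrepancy
  set g : M' → ℝ := fun m' =>
    ∑ x, |O (Q x) m' * a x - (Na m' / Nb m') * (O (Q x) m' * b x)| with hg
  have hg0 : ∀ m', 0 ≤ g m' := fun m' => Finset.sum_nonneg fun x _ => abs_nonneg _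
  -- Claim 1 : each term is ≤ (1 - δT) * g m'
  have claim1 : ∀ m', Na m' * ∑ x', |FA m' x' - FB m' x'| ≤ (1 - δT) * g m' := by
    intro m'
    rcases (hNa0 m').lt_or_eq with hpos | hzero
    · have hbpos := habN m' hpos
      rw [hFA m' hpos, hFB m' hbpos]
      set l : X → ℝ := fun x => O (Q x) m' * a x / Na m' - O (Q x) m' * b x / Nb m' with hl
      have hls : ∑ x, l x = 0 := by
        rw [hl]
        simp only
        rw [Finset.sum_sub_distrib, ← Finset.sum_div, ← Finset.sum_div]
        rw [div_self (ne_of_gt hpos), div_self (ne_of_gt hbpos)]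
        ring
      have hptwise : ∀ x', (∑ x, T x x' * (O (Q x) m' * a x)) / Na m'
          - (∑ x, T x x' * (O (Q x) m' * b x)) / Nb m' = ∑ x, T x x' * l x := by
        intro x'
        rw [hl]
        simp only
        simp_rw [mul_sub, ← mul_div_assoc]
        rw [Finset.sum_sub_distrib, ← Finset.sum_div, ← Finset.sum_div]
      have hdob := dobrushin T hT_nonneg hT_sum δT hδT l hls
      have hkey : ∀ x, Na m' * |l x|
          = |O (Q x) m' * a x - Na m' / Nb m' * (O (Q x) m' * b x)| := by
        intro x
        have h1 : |Na m' * l x| = Na m' * |l x| := by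
          rw [abs_mul, abs_of_pos hpos]
        rw [← h1]
        congr 1
        rw [hl]
        simp only
        field_simp
      have hgsum : g m' = ∑ x, Na m' * |l x| := by
        rw [hg]
        exact Finset.sum_congr rfl fun x _ => (hkey x).symm
      calc Na m' * ∑ x', |(fun x' => (∑ x, T x x' * (O (Q x) m' * a x)) / Na m') x'
              - (fun x' => (∑ x, T x x' * (O (Q x) m' * b x)) / Nb m') x'|
          = Na m' * ∑ x', |∑ x, T x x' * l x| := by
            congr 1
            exact Finset.sum_congr rfl fun x' _ => by rw [← hptwise x']
        _ ≤ Na m' * ((1 - δT) * ∑ x, |l x|) :=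
            mul_le_mul_of_nonneg_left hdob (hNa0 m')
        _ = (1 - δT) * g m' := by
            rw [hgsum, ← Finset.mul_sum]
            ring
    · rw [← hzero, zero_mul]
      exact mul_nonneg hδT0 (hg0 m')
  -- Claim 2 : g m' is at most the O-smoothed TV plus the normalizer gap
  have claim2 : ∀ m', g m' ≤ (∑ x, O (Q x) m' * |a x - b x|) + |Nb m' - Na m'| := by
    intro m'
    rcases (hNa0 m').lt_or_eq with hpos | hzero
    · have hbpos := habN m' hpos
      have hpt : ∀ x, |O (Q x) m' * a x - Na m' / Nb m' * (O (Q x) m' * b x)|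
          ≤ O (Q x) m' * |a x - b x| + (O (Q x) m' * b x / Nb m') * |Nb m' - Na m'| := by
        intro x
        have hid : O (Q x) m' * a x - Na m' / Nb m' * (O (Q x) m' * b x)
            = O (Q x) m' * (a x - b x) + (O (Q x) m' * b x / Nb m') * (Nb m' - Na m') := by
          field_simp
          ring
        rw [hid]
        refine (abs_add_le _ _).trans ?_
        rw [abs_mul, abs_mul, abs_of_nonneg (hO_nonneg _ _),
          abs_of_nonneg (div_nonneg (mul_nonneg (hO_nonneg _ _) (hb0 x)) (hNb0 m'))]
      calc g m' ≤ ∑ x, (O (Q x) m' * |a x - b x|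
              + (O (Q x) m' * b x / Nb m') * |Nb m' - Na m'|) := by
            rw [hg]; exact Finset.sum_le_sum fun x _ => hpt x
        _ = (∑ x, O (Q x) m' * |a x - b x|) + |Nb m' - Na m'| := by
            rw [Finset.sum_add_distrib]
            congr 1
            rw [← Finset.sum_mul, ← Finset.sum_div]
            rw [show (∑ x, O (Q x) m' * b x) = Nb m' from rfl]
            rw [div_self (ne_of_gt hbpos), one_mul]
    · have hgz : g m' = 0 := by
        rw [hg]
        refine Finset.sum_eq_zero fun x _ => ?_
        have h1 : O (Q x) m' * a x = 0 := by
          have := Finset.sum_eq_zero_iff_of_nonneg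
            (fun x (_ : x ∈ Finset.univ) => mul_nonneg (hO_nonneg (Q x) m') (ha0 x)) |>.mp
            hzero.symm x (Finset.mem_univ x)
          exact this
        rw [h1, show Na m' = 0 from hzero.symm, zero_div, zero_mul, sub_zero, abs_zero]
      rw [hgz]
      exact add_nonneg (Finset.sum_nonneg fun x _ =>
        mul_nonneg (hO_nonneg _ _) (abs_nonneg _)) (abs_nonneg _)
  -- Claim 3 : summing g over m'
  have claim3 : ∑ m', g m' ≤ (2 - δO) * ∑ x, |a x - b x| := by
    have bound1 : ∑ m', ∑ x, O (Q x) m' * |a x - b x| = ∑ x, |a x - b x| := by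
      rw [Finset.sum_comm]
      refine Finset.sum_congr rfl fun x _ => ?_
      rw [← Finset.sum_mul, hO_sum, one_mul]
    have bound2 : ∑ m', |Nb m' - Na m'| ≤ (1 - δO) * ∑ x, |a x - b x| := by
      have hdob := dobrushin (fun x m'' => O (Q x) m'') (fun x m'' => hO_nonneg _ _)
        (fun x => hO_sum (Q x)) δO (fun x x'' => hδO (Q x) (Q x''))
        (fun x => b x - a x) (by rw [Finset.sum_sub_distrib, has, hbs]; ring)
      have e1 : ∀ m', Nb m' - Na m' = ∑ x, O (Q x) m' * (b x - a x) := by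
        intro m'
        simp_rw [mul_sub]
        rw [Finset.sum_sub_distrib]
      have e2 : ∑ x, |b x - a x| = ∑ x, |a x - b x| :=
        Finset.sum_congr rfl fun x _ => abs_sub_comm _ _
      calc ∑ m', |Nb m' - Na m'| = ∑ m', |∑ x, O (Q x) m' * (b x - a x)| :=
            Finset.sum_congr rfl fun m' _ => by rw [e1]
        _ ≤ (1 - δO) * ∑ x, |b x - a x| := hdob
        _ = (1 - δO) * ∑ x, |a x - b x| := by rw [e2]
    calc ∑ m', g m'
        ≤ ∑ m', ((∑ x, O (Q x) m' * |a x - b x|) + |Nb m' - Na m'|) :=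
          Finset.sum_le_sum fun m' _ => claim2 m'
      _ = (∑ m', ∑ x, O (Q x) m' * |a x - b x|) + ∑ m', |Nb m' - Na m'| :=
          Finset.sum_add_distrib
      _ ≤ ∑ x, |a x - b x| + (1 - δO) * ∑ x, |a x - b x| := by
          rw [bound1]
          exact add_le_add_right bound2 _
      _ = (2 - δO) * ∑ x, |a x - b x| := by ring
  calc ∑ m' : M', Na m' * ∑ x', |FA m' x' - FB m' x'|
      ≤ ∑ m', (1 - δT) * g m' := Finset.sum_le_sum fun m' _ => claim1 m'
    _ = (1 - δT) * ∑ m', g m' := by rw [Finset.mul_sum]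
    _ ≤ (1 - δT) * ((2 - δO) * ∑ x, |a x - b x|) :=
        mul_le_mul_of_nonneg_left claim3 hδT0
    _ = (1 - δT) * (2 - δO) * ∑ x, |a x - b x| := by ring

lemma sum_pos_exists {A : Type*} [Fintype A] (f : A → ℝ) (h : 0 < ∑ a, f a) :
    ∃ a, 0 < f a := by
  by_contra hc
  push_neg at hc
  have := Finset.sum_nonpos (fun a (_ : a ∈ Finset.univ) => hc a)
  linarith

lemma pred_snoc {X M M' : Type*} [Fintype X] [Fintype M']
    (T : X → X → ℝ) (O : M → M' → ℝ)
    (q : (t : ℕ) → (Fin t → M') → X → M) (ρ : X → ℝ)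
    (t : ℕ) (h : Fin t → M') (m' : M') :
    pred T O q ρ (t + 1) (Fin.snoc h m') =
      if 0 < ∑ x, O (q t h x) m' * pred T O q ρ t h x then
        fun x' => (∑ x, T x x' * O (q t h x) m' * pred T O q ρ t h x) /
          ∑ x, O (q t h x) m' * pred T O q ρ t h x
      else
        fun x' => ∑ x, T x x' * pred T O q ρ t h x := by
  have e1 : (fun i : Fin t => (Fin.snoc h m' : Fin (t + 1) → M') i.castSucc) = h :=
    funext fun i => by simp
  have e2 : (Fin.snoc h m' : Fin (t + 1) → M') (Fin.last t) = m' := by simp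
  simp only [pred, e1, e2]

lemma pathProb_snoc {X M M' : Type*} [Fintype X] [Fintype M']
    (T : X → X → ℝ) (O : M → M' → ℝ)
    (q : (t : ℕ) → (Fin t → M') → X → M) (ρ : X → ℝ)
    (t : ℕ) (h : Fin t → M') (m' : M') :
    pathProb T O q ρ (t + 1) (Fin.snoc h m') =
      pathProb T O q ρ t h * ∑ x, O (q t h x) m' * pred T O q ρ t h x := by
  have e1 : (fun i : Fin t => (Fin.snoc h m' : Fin (t + 1) → M') i.castSucc) = h :=
    funext fun i => by simp
  have e2 : (Fin.snoc h m' : Fin (t + 1) → M') (Fin.last t) = m' := by simp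
  simp only [pathProb, e1, e2]

lemma pred_invariant {X M M' : Type*} [Fintype X] [Fintype M']
    (T : X → X → ℝ) (hT_nonneg : ∀ x x', 0 ≤ T x x') (hT_sum : ∀ x, ∑ x', T x x' = 1)
    (O : M → M' → ℝ) (hO_nonneg : ∀ m m', 0 ≤ O m m')
    (q : (t : ℕ) → (Fin t → M') → X → M)
    (μ ν : X → ℝ)
    (hμ_nonneg : ∀ x, 0 ≤ μ x) (hμ_sum : ∑ x, μ x = 1)
    (hν_nonneg : ∀ x, 0 ≤ ν x) (hν_sum : ∑ x, ν x = 1)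
    (habs : ∀ x, 0 < μ x → 0 < ν x) :
    ∀ t (h : Fin t → M'),
      0 ≤ pathProb T O q μ t h ∧
      (0 < pathProb T O q μ t h →
        (∀ x, 0 ≤ pred T O q μ t h x) ∧ (∑ x, pred T O q μ t h x = 1) ∧
        (∀ x, 0 ≤ pred T O q ν t h x) ∧ (∑ x, pred T O q ν t h x = 1) ∧
        (∀ x, 0 < pred T O q μ t h x → 0 < pred T O q ν t h x)) := by
  intro t
  induction t with
  | zero =>
    intro h
    refine ⟨by simp [pathProb], fun _ => ?_⟩
    exact ⟨hμ_nonneg, hμ_sum, hν_nonneg, hν_sum, habs⟩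
  | succ t IH =>
    intro h
    set h' : Fin t → M' := fun i => h i.castSucc with hh'
    set m' : M' := h (Fin.last t) with hm'
    obtain ⟨hP0, hPinv⟩ := IH h'
    have hpath : pathProb T O q μ (t + 1) h
        = pathProb T O q μ t h' * ∑ x, O (q t h' x) m' * pred T O q μ t h' x := by
      simp only [pathProb, hh', hm']
    have hpredμ : pred T O q μ (t + 1) h
        = if 0 < ∑ x, O (q t h' x) m' * pred T O q μ t h' x then
            fun x' => (∑ x, T x x' * O (q t h' x) m' * pred T O q μ t h' x) /
              ∑ x, O (q t h' x) m' * pred T O q μ t h' x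
          else fun x' => ∑ x, T x x' * pred T O q μ t h' x := by
      simp only [pred, hh', hm']
    have hpredν : pred T O q ν (t + 1) h
        = if 0 < ∑ x, O (q t h' x) m' * pred T O q ν t h' x then
            fun x' => (∑ x, T x x' * O (q t h' x) m' * pred T O q ν t h' x) /
              ∑ x, O (q t h' x) m' * pred T O q ν t h' x
          else fun x' => ∑ x, T x x' * pred T O q ν t h' x := by
      simp only [pred, hh', hm']
    constructor
    · rcases hP0.lt_or_eq with hpos | hzero
      · obtain ⟨hμ0, _, _, _, _⟩ := hPinv hpos
        rw [hpath]
        exact mul_nonneg hpos.le (Finset.sum_nonneg fun x _ =>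
          mul_nonneg (hO_nonneg _ _) (hμ0 x))
      · rw [hpath, ← hzero, zero_mul]
    · intro hposall
      rw [hpath] at hposall
      have hP : 0 < pathProb T O q μ t h' := by
        rcases hP0.lt_or_eq with hpos | hzero
        · exact hpos
        · exfalso; rw [← hzero, zero_mul] at hposall; exact lt_irrefl 0 hposall
      obtain ⟨hμ0, hμ1, hν0, hν1, hac⟩ := hPinv hP
      have hNμ : 0 < ∑ x, O (q t h' x) m' * pred T O q μ t h' x := by
        by_contra hc
        push_neg at hc
        nlinarith
      have hNν : 0 < ∑ x, O (q t h' x) m' * pred T O q ν t h' x := by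
        obtain ⟨x, hx⟩ := sum_pos_exists _ hNμ
        have hO' : 0 < O (q t h' x) m' := by
          rcases (hO_nonneg (q t h' x) m').lt_or_eq with h1 | h1
          · exact h1
          · exfalso; rw [← h1, zero_mul] at hx; exact lt_irrefl 0 hx
        have hμ' : 0 < pred T O q μ t h' x := by
          rcases (hμ0 x).lt_or_eq with h1 | h1
          · exact h1
          · exfalso; rw [← h1, mul_zero] at hx; exact lt_irrefl 0 hx
        have hν' := hac x hμ'
        have hle : O (q t h' x) m' * pred T O q ν t h' x
            ≤ ∑ x, O (q t h' x) m' * pred T O q ν t h' x :=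
          Finset.single_le_sum (fun x _ => mul_nonneg (hO_nonneg _ _) (hν0 x))
            (Finset.mem_univ x)
        nlinarith
      rw [hpredμ, if_pos hNμ, hpredν, if_pos hNν]
      have sum_one : ∀ (ρ : X → ℝ), (∀ x, 0 ≤ ρ x) →
          (N : ℝ) → N = ∑ x, O (q t h' x) m' * ρ x → 0 < N →
          ∑ x', (∑ x, T x x' * O (q t h' x) m' * ρ x) / N = 1 := by
        intro ρ hρ N hN hNpos
        rw [← Finset.sum_div, Finset.sum_comm]
        have : ∀ x, ∑ x', T x x' * O (q t h' x) m' * ρ x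
            = O (q t h' x) m' * ρ x := by
          intro x
          rw [← Finset.sum_mul, ← Finset.sum_mul, hT_sum, one_mul]
        rw [Finset.sum_congr rfl fun x _ => this x, ← hN, div_self (ne_of_gt hNpos)]
      refine ⟨?_, ?_, ?_, ?_, ?_⟩
      · intro x'
        exact div_nonneg (Finset.sum_nonneg fun x _ =>
          mul_nonneg (mul_nonneg (hT_nonneg _ _) (hO_nonneg _ _)) (hμ0 x)) hNμ.le
      · exact sum_one _ hμ0 _ rfl hNμ
      · intro x'
        exact div_nonneg (Finset.sum_nonneg fun x _ =>
          mul_nonneg (mul_nonneg (hT_nonneg _ _) (hO_nonneg _ _)) (hν0 x)) hNν.le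
      · exact sum_one _ hν0 _ rfl hNν
      · intro x' hx'
        have hnum : 0 < ∑ x, T x x' * O (q t h' x) m' * pred T O q μ t h' x := by
          by_contra hc
          push_neg at hc
          have : (∑ x, T x x' * O (q t h' x) m' * pred T O q μ t h' x) /
              (∑ x, O (q t h' x) m' * pred T O q μ t h' x) ≤ 0 :=
            div_nonpos_of_nonpos_of_nonneg hc hNμ.le
          linarith
        obtain ⟨x, hx⟩ := sum_pos_exists _ hnum
        have hT' : 0 < T x x' := by
          rcases (hT_nonneg x x').lt_or_eq with h1 | h1
          · exact h1
          · exfalso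
            rw [← h1, zero_mul, zero_mul] at hx
            exact lt_irrefl 0 hx
        have hO' : 0 < O (q t h' x) m' := by
          rcases (hO_nonneg (q t h' x) m').lt_or_eq with h1 | h1
          · exact h1
          · exfalso; rw [← h1, mul_zero, zero_mul] at hx; exact lt_irrefl 0 hx
        have hμ' : 0 < pred T O q μ t h' x := by
          rcases (hμ0 x).lt_or_eq with h1 | h1
          · exact h1
          · exfalso; rw [← h1, mul_zero] at hx; exact lt_irrefl 0 hx
        have hν' := hac x hμ'
        have hle : T x x' * O (q t h' x) m' * pred T O q ν t h' x
            ≤ ∑ x, T x x' * O (q t h' x) m' * pred T O q ν t h' x :=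
          Finset.single_le_sum
            (f := fun y => T y x' * O (q t h' y) m' * pred T O q ν t h' y)
            (fun y _ => mul_nonneg (mul_nonneg (hT_nonneg _ _) (hO_nonneg _ _)) (hν0 y))
            (Finset.mem_univ x)
        have : 0 < ∑ x, T x x' * O (q t h' x) m' * pred T O q ν t h' x := by nlinarith
        exact div_pos this hNν

/-- iterated form of the paper's Corollary 3: exponential
stability in expected total variation of the predictor process, uniformly over
observation-feedback encoding policies, with rate
`α = (1 − δ(T))·(2 − δ(O))`. -/
theorem predictor_exponential_stability
    {X M M' : Type*} [Fintype X] [Fintype M] [Fintype M']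
    [Nonempty X] [Nonempty M] [Nonempty M']
    (T : X → X → ℝ) (hT_nonneg : ∀ x x', 0 ≤ T x x')
    (hT_sum : ∀ x, ∑ x', T x x' = 1)
    (O : M → M' → ℝ) (hO_nonneg : ∀ m m', 0 ≤ O m m')
    (hO_sum : ∀ m, ∑ m', O m m' = 1)
    (q : (t : ℕ) → (Fin t → M') → X → M)
    (μ ν : X → ℝ)
    (hμ_nonneg : ∀ x, 0 ≤ μ x) (hμ_sum : ∑ x, μ x = 1)
    (hν_nonneg : ∀ x, 0 ≤ ν x) (hν_sum : ∑ x, ν x = 1)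
    (habs : ∀ x, 0 < μ x → 0 < ν x)
    (α : ℝ)
    (hα : α = (1 - Finset.univ.inf' Finset.univ_nonempty
                  (fun p : X × X => ∑ x', min (T p.1 x') (T p.2 x'))) *
              (2 - Finset.univ.inf' Finset.univ_nonempty
                  (fun p : M × M => ∑ m', min (O p.1 m') (O p.2 m')))) :
    ∀ t : ℕ,
      ∑ h : Fin t → M',
          pathProb T O q μ t h *
            (∑ x, |pred T O q μ t h x - pred T O q ν t h x|)
        ≤ α ^ t * ∑ x, |μ x - ν x| := by
  -- main proof
  set δT := Finset.univ.inf' Finset.univ_nonempty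
      (fun p : X × X => ∑ x', min (T p.1 x') (T p.2 x')) with hδTdef
  set δO := Finset.univ.inf' Finset.univ_nonempty
      (fun p : M × M => ∑ m', min (O p.1 m') (O p.2 m')) with hδOdef
  have hδT : ∀ x x'', δT ≤ ∑ x', min (T x x') (T x'' x') := fun x x'' =>
    Finset.inf'_le _ (Finset.mem_univ (x, x''))
  have hδO : ∀ m m'', δO ≤ ∑ mm, min (O m mm) (O m'' mm) := fun m m'' =>
    Finset.inf'_le _ (Finset.mem_univ (m, m''))
  have hδT1 : δT ≤ 1 := by
    obtain ⟨x⟩ := (inferInstance : Nonempty X)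
    have h1 := hδT x x
    simpa [hT_sum x] using h1
  have hδO1 : δO ≤ 1 := by
    obtain ⟨m⟩ := (inferInstance : Nonempty M)
    have h1 := hδO m m
    simpa [hO_sum m] using h1
  have hα0 : 0 ≤ α := by
    rw [hα]
    exact mul_nonneg (by linarith) (by linarith)
  have inv := pred_invariant T hT_nonneg hT_sum O hO_nonneg q μ ν
    hμ_nonneg hμ_sum hν_nonneg hν_sum habs
  intro t
  induction t with
  | zero =>
    simp only [pow_zero, one_mul]
    haveI : Unique (Fin 0 → M') := ⟨⟨fun i => absurd i.2 (by simp)⟩, fun f => funext fun i => absurd i.2 (by simp)⟩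
    rw [Finset.univ_unique, Finset.sum_singleton]
    simp [pathProb, pred]
  | succ t IH =>
    have key : ∀ h' : Fin t → M',
        ∑ m' : M', pathProb T O q μ (t + 1) (Fin.snoc h' m') *
          ∑ x, |pred T O q μ (t + 1) (Fin.snoc h' m') x
            - pred T O q ν (t + 1) (Fin.snoc h' m') x|
        ≤ α * (pathProb T O q μ t h' *
            ∑ x, |pred T O q μ t h' x - pred T O q ν t h' x|) := by
      intro h'
      obtain ⟨hP0, hPinv⟩ := inv t h'
      rcases hP0.lt_or_eq with hP | hP
      · obtain ⟨hμ0, hμ1, hν0, hν1, hac⟩ := hPinv hP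
        have hFA : ∀ m', 0 < ∑ x, O (q t h' x) m' * pred T O q μ t h' x →
            pred T O q μ (t + 1) (Fin.snoc h' m') =
            fun x' => (∑ x, T x x' * (O (q t h' x) m' * pred T O q μ t h' x)) /
              ∑ x, O (q t h' x) m' * pred T O q μ t h' x := by
          intro m' hm
          rw [pred_snoc, if_pos hm]
          funext x'
          congr 1
          exact Finset.sum_congr rfl fun x _ => mul_assoc _ _ _
        have hFB : ∀ m', 0 < ∑ x, O (q t h' x) m' * pred T O q ν t h' x →
            pred T O q ν (t + 1) (Fin.snoc h' m') =
            fun x' => (∑ x, T x x' * (O (q t h' x) m' * pred T O q ν t h' x)) /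
              ∑ x, O (q t h' x) m' * pred T O q ν t h' x := by
          intro m' hm
          rw [pred_snoc, if_pos hm]
          funext x'
          congr 1
          exact Finset.sum_congr rfl fun x _ => mul_assoc _ _ _
        have hsb := step_bound T hT_nonneg hT_sum O hO_nonneg hO_sum δT δO hδT hδT1 hδO
          (q t h') (pred T O q μ t h') (pred T O q ν t h') hμ0 hμ1 hν0 hν1 hac
          (fun m' => pred T O q μ (t + 1) (Fin.snoc h' m'))
          (fun m' => pred T O q ν (t + 1) (Fin.snoc h' m'))
          hFA hFB
        calc ∑ m' : M', pathProb T O q μ (t + 1) (Fin.snoc h' m') *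
              ∑ x, |pred T O q μ (t + 1) (Fin.snoc h' m') x
                - pred T O q ν (t + 1) (Fin.snoc h' m') x|
            = pathProb T O q μ t h' *
              ∑ m' : M', (∑ x, O (q t h' x) m' * pred T O q μ t h' x) *
                ∑ x, |pred T O q μ (t + 1) (Fin.snoc h' m') x
                  - pred T O q ν (t + 1) (Fin.snoc h' m') x| := by
              rw [Finset.mul_sum]
              refine Finset.sum_congr rfl fun m' _ => ?_
              rw [pathProb_snoc, mul_assoc]
          _ ≤ pathProb T O q μ t h' *
              ((1 - δT) * (2 - δO) *
                ∑ x, |pred T O q μ t h' x - pred T O q ν t h' x|) :=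
              mul_le_mul_of_nonneg_left hsb hP.le
          _ = α * (pathProb T O q μ t h' *
                ∑ x, |pred T O q μ t h' x - pred T O q ν t h' x|) := by
              rw [hα]; ring
      · have hz : ∀ m' : M', pathProb T O q μ (t + 1) (Fin.snoc h' m') = 0 := by
          intro m'
          rw [pathProb_snoc, ← hP, zero_mul]
        rw [← hP]
        simp [hz]
    have reindex : ∑ h : Fin (t + 1) → M',
          pathProb T O q μ (t + 1) h *
            ∑ x, |pred T O q μ (t + 1) h x - pred T O q ν (t + 1) h x|
        = ∑ h' : Fin t → M', ∑ m' : M',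
            pathProb T O q μ (t + 1) (Fin.snoc h' m') *
              ∑ x, |pred T O q μ (t + 1) (Fin.snoc h' m') x
                - pred T O q ν (t + 1) (Fin.snoc h' m') x| := by
      rw [← Fintype.sum_equiv ((Fin.snocEquiv (fun _ => M')))
        (fun p : M' × (Fin t → M') =>
          pathProb T O q μ (t + 1) (Fin.snoc p.2 p.1) *
            ∑ x, |pred T O q μ (t + 1) (Fin.snoc p.2 p.1) x
              - pred T O q ν (t + 1) (Fin.snoc p.2 p.1) x|)
        (fun h => pathProb T O q μ (t + 1) h *
            ∑ x, |pred T O q μ (t + 1) h x - pred T O q ν (t + 1) h x|)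
        (fun p => by simp [Fin.snocEquiv])]
      rw [Fintype.sum_prod_type]
      rw [Finset.sum_comm]
    calc ∑ h : Fin (t + 1) → M',
          pathProb T O q μ (t + 1) h *
            ∑ x, |pred T O q μ (t + 1) h x - pred T O q ν (t + 1) h x|
        = ∑ h' : Fin t → M', ∑ m' : M',
            pathProb T O q μ (t + 1) (Fin.snoc h' m') *
              ∑ x, |pred T O q μ (t + 1) (Fin.snoc h' m') x
                - pred T O q ν (t + 1) (Fin.snoc h' m') x| := reindex
      _ ≤ ∑ h' : Fin t → M', α * (pathProb T O q μ t h' *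
            ∑ x, |pred T O q μ t h' x - pred T O q ν t h' x|) :=
          Finset.sum_le_sum fun h' _ => key h'
      _ = α * ∑ h' : Fin t → M', pathProb T O q μ t h' *
            ∑ x, |pred T O q μ t h' x - pred T O q ν t h' x| := by
          rw [Finset.mul_sum]
      _ ≤ α * (α ^ t * ∑ x, |μ x - ν x|) := mul_le_mul_of_nonneg_left IH hα0
      _ = α ^ (t + 1) * ∑ x, |μ x - ν x| := by ring
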